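/- Let n ≥ 1, λ ≥ 0 and 1 < p < ∞. There is a constant c = c(n,p,λ) such that for every weight w ∈ A_p, every t > 0 and every nonnegative measurable f, one has w({x ∈ ℝ^n : M_{Φ_λ}f(x) > t}) ≤ c [w]_{A_p} ∫_{ℝ^n} Φ_λ(f(x)/t)^p w(x) dx, where w(E) = ∫_E w dx. -/

import Mathlib

open MeasureTheory Filter
open scoped ENNReal NNReal

/-- A (closed) cube in ℝⁿ with sides parallel to the coordinate axes. -/
def IsCube (n : ℕ) (Q : Set (Fin n → ℝ)) : Prop :=
  ∃ (a : Fin n → ℝ) (h : ℝ), 0 < h ∧ Q = {y | ∀ i, y i ∈ Set.Icc (a i) (a i + h)}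

/-- Average of an `ℝ≥0∞`-valued function over a set. -/
noncomputable def setAvg (n : ℕ) (Q : Set (Fin n → ℝ)) (g : (Fin n → ℝ) → ℝ≥0∞) : ℝ≥0∞ :=
  (volume Q)⁻¹ * ∫⁻ y in Q, g y

/-- The Muckenhoupt `A_p` constant of a weight `w`. -/
noncomputable def ApConst (n : ℕ) (p : ℝ) (w : (Fin n → ℝ) → ℝ≥0∞) : ℝ≥0∞ :=
  ⨆ (Q : Set (Fin n → ℝ)) (_ : IsCube n Q),
    setAvg n Q w * (setAvg n Q fun y => w y ^ (1 - p / (p - 1))) ^ (p - 1)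

/-- A weight: a measurable nonnegative (`ℝ≥0∞`-valued) locally integrable function. -/
def IsWeight (n : ℕ) (w : (Fin n → ℝ) → ℝ≥0∞) : Prop :=
  Measurable w ∧ ∀ Q : Set (Fin n → ℝ), IsCube n Q → (∫⁻ y in Q, w y) < ∞

/-- Weighted L^p norm of an `ℝ≥0∞`-valued function. -/
noncomputable def wLpNormE (n : ℕ) (p : ℝ) (w : (Fin n → ℝ) → ℝ≥0∞)
    (g : (Fin n → ℝ) → ℝ≥0∞) : ℝ≥0∞ :=
  (∫⁻ x, g x ^ p * w x) ^ (1 / p)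

/-- Weighted L^p norm of a real function. -/
noncomputable def wLpNorm (n : ℕ) (p : ℝ) (w : (Fin n → ℝ) → ℝ≥0∞)
    (f : (Fin n → ℝ) → ℝ) : ℝ≥0∞ :=
  wLpNormE n p w fun x => (‖f x‖₊ : ℝ≥0∞)

/-- Unweighted L^p norm of a real function on ℝⁿ. -/
noncomputable def lpNorm (n : ℕ) (p : ℝ) (f : (Fin n → ℝ) → ℝ) : ℝ≥0∞ :=
  (∫⁻ x, (‖f x‖₊ : ℝ≥0∞) ^ p) ^ (1 / p)

/-- Unweighted L^p norm of an `ℝ≥0∞`-valued function on ℝⁿ. -/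
noncomputable def lpNormE (n : ℕ) (p : ℝ) (g : (Fin n → ℝ) → ℝ≥0∞) : ℝ≥0∞ :=
  (∫⁻ x, g x ^ p) ^ (1 / p)

/-- Operator norm on unweighted `L^p(ℝⁿ)`: the least `C ∈ [0,∞]` with
`‖Tf‖_p ≤ C ‖f‖_p` for all `f ∈ L^p`. -/
noncomputable def opNorm (n : ℕ) (p : ℝ)
    (T : ((Fin n → ℝ) → ℝ) → (Fin n → ℝ) → ℝ) : ℝ≥0∞ :=
  sInf {C : ℝ≥0∞ | ∀ f : (Fin n → ℝ) → ℝ, Measurable f → lpNorm n p f < ∞ →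
    lpNorm n p (T f) ≤ C * lpNorm n p f}

/-- The Hardy–Littlewood maximal operator (over cubes with sides parallel to the axes). -/
noncomputable def HLM (n : ℕ) (g : (Fin n → ℝ) → ℝ≥0∞) : (Fin n → ℝ) → ℝ≥0∞ :=
  fun x => ⨆ (Q : Set (Fin n → ℝ)) (_ : IsCube n Q) (_ : x ∈ Q), setAvg n Q g

/-- The operator norm of the Hardy–Littlewood maximal operator on `L^p(ℝⁿ)`. -/
noncomputable def maximalOpNorm (n : ℕ) (p : ℝ) : ℝ≥0∞ :=
  sInf {C : ℝ≥0∞ | ∀ f : (Fin n → ℝ) → ℝ, Measurable f → lpNorm n p f < ∞ →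
    lpNormE n p (HLM n fun y => (‖f y‖₊ : ℝ≥0∞)) ≤ C * lpNorm n p f}

/-- The Young function `Φ_λ(t) = t (log(e+t))^λ`. -/
noncomputable def PhiLam (lam t : ℝ) : ℝ := t * Real.log (Real.exp 1 + t) ^ lam

/-- Localized Luxemburg norm `‖f‖_{Φ_λ,Q}` over a cube `Q`. -/
noncomputable def luxNorm (n : ℕ) (lam : ℝ) (Q : Set (Fin n → ℝ))
    (f : (Fin n → ℝ) → ℝ) : ℝ≥0∞ :=
  ⨅ (t : ℝ) (_ : 0 < t)
    (_ : (volume Q)⁻¹ * ∫⁻ y in Q, ENNReal.ofReal (PhiLam lam (|f y| / t)) ≤ 1),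
    ENNReal.ofReal t

/-- The Orlicz maximal operator `M_{Φ_λ} f(x) = sup_{Q ∋ x} ‖f‖_{Φ_λ,Q}`. -/
noncomputable def orliczMax (n : ℕ) (lam : ℝ) (f : (Fin n → ℝ) → ℝ) :
    (Fin n → ℝ) → ℝ≥0∞ :=
  fun x => ⨆ (Q : Set (Fin n → ℝ)) (_ : IsCube n Q) (_ : x ∈ Q), luxNorm n lam Q f


section Aux
open Metric Set

lemma ball_eq_cube (n : ℕ) (x : Fin n → ℝ) {r : ℝ} (hr : 0 ≤ r) :
    closedBall x r = {y : Fin n → ℝ | ∀ i, y i ∈ Set.Icc (x i - r) (x i - r + 2 * r)} := by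
  ext y
  simp only [mem_closedBall, dist_pi_le_iff hr, Real.dist_eq, mem_setOf_eq, Set.mem_Icc]
  refine forall_congr' fun i => ?_
  rw [abs_le]
  constructor <;> rintro ⟨h1, h2⟩ <;> constructor <;> linarith

lemma isCube_closedBall (n : ℕ) (x : Fin n → ℝ) {r : ℝ} (hr : 0 < r) :
    IsCube n (closedBall x r) :=
  ⟨fun i => x i - r, 2 * r, by linarith, ball_eq_cube n x hr.le⟩

lemma cube_pi (n : ℕ) (a : Fin n → ℝ) (h₀ : ℝ) :
    {y : Fin n → ℝ | ∀ i, y i ∈ Set.Icc (a i) (a i + h₀)} =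
      Set.pi Set.univ (fun i => Set.Icc (a i) (a i + h₀)) := by
  ext y; rw [Set.mem_univ_pi]; rfl

lemma cube_vol (n : ℕ) (a : Fin n → ℝ) (h₀ : ℝ) :
    volume {y : Fin n → ℝ | ∀ i, y i ∈ Set.Icc (a i) (a i + h₀)} =
      ENNReal.ofReal h₀ ^ n := by
  rw [cube_pi, volume_pi_pi]
  simp [Real.volume_Icc]

lemma cube_measurableSet {n : ℕ} {Q : Set (Fin n → ℝ)} (hQ : IsCube n Q) :
    MeasurableSet Q := by
  obtain ⟨a, h₀, hh, rfl⟩ := hQ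
  rw [cube_pi]
  exact MeasurableSet.univ_pi fun i => measurableSet_Icc

lemma cube_vol_pos {n : ℕ} {Q : Set (Fin n → ℝ)} (hQ : IsCube n Q) :
    0 < volume Q ∧ volume Q < ⊤ := by
  obtain ⟨a, h₀, hh, rfl⟩ := hQ
  rw [cube_vol n a h₀]
  exact ⟨ENNReal.pow_pos (by simp [hh]) n, ENNReal.pow_lt_top ENNReal.ofReal_lt_top⟩

end Aux


section Aux2
open Metric Set

lemma cube_weight_est (n : ℕ) {p : ℝ} (hp : 1 < p) {w : (Fin n → ℝ) → ℝ≥0∞}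
    (hw : IsWeight n w) (hA : ApConst n p w < ⊤) {g : (Fin n → ℝ) → ℝ≥0∞} (hg : Measurable g)
    {B : Set (Fin n → ℝ)} (hB : IsCube n B) {ε : ℝ≥0∞}
    (hV : volume B ≤ ε * ∫⁻ y in B, g y) :
    (∫⁻ y in B, w y) ≤ ε ^ p * (ApConst n p w * ∫⁻ y in B, g y ^ p * w y) := by
  classical
  have hp0 : (0:ℝ) < p := by linarith
  have hp1 : (0:ℝ) < p - 1 := by linarith
  set q : ℝ := p / (p - 1) with hq
  set V : ℝ≥0∞ := volume B with hVdef
  set W : ℝ≥0∞ := ∫⁻ y in B, w y with hWdef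
  set IB : ℝ≥0∞ := ∫⁻ y in B, g y with hIdef
  set AB : ℝ≥0∞ := ∫⁻ y in B, g y ^ p * w y with hAdef
  set SB : ℝ≥0∞ := ∫⁻ y in B, w y ^ (1 - p / (p - 1)) with hSdef
  obtain ⟨hVpos, hVtop⟩ := cube_vol_pos hB
  have hBm : MeasurableSet B := cube_measurableSet hB
  by_cases hW0 : W = 0
  · rw [hW0]; exact zero_le
  have hApB : V⁻¹ * W * ((V⁻¹ * SB) ^ (p - 1)) ≤ ApConst n p w := by
    have h := le_iSup₂ (f := fun Q (_ : IsCube n Q) =>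
      setAvg n Q w * (setAvg n Q fun y => w y ^ (1 - p / (p - 1))) ^ (p - 1)) B hB
    simpa [ApConst, setAvg, hVdef, hWdef, hSdef] using h
  have hWfin : W ≠ ⊤ := (hw.2 B hB).ne
  -- the set where w vanishes inside B is null
  have hZ : volume (B ∩ {x | w x = 0}) = 0 := by
    by_contra hz
    have hexp_neg : 1 - p / (p - 1) < 0 := by
      have h1 : (1:ℝ) < p / (p - 1) := (one_lt_div hp1).2 (by linarith)
      linarith
    have hZm : MeasurableSet (B ∩ {x | w x = 0}) :=
      hBm.inter (hw.1 (measurableSet_singleton 0))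
    have htop : ∫⁻ y in B ∩ {x | w x = 0}, w y ^ (1 - p / (p - 1)) = ⊤ := by
      have : ∀ x ∈ B ∩ {x | w x = 0}, w x ^ (1 - p / (p - 1)) = (⊤ : ℝ≥0∞) := by
        rintro x ⟨-, hx⟩
        rw [Set.mem_setOf_eq] at hx
        rw [hx, ENNReal.zero_rpow_of_neg hexp_neg]
      rw [setLIntegral_congr_fun hZm this, setLIntegral_const,
        ENNReal.top_mul hz]
    have hStop : SB = ⊤ := by
      rw [hSdef]
      exact top_le_iff.1 (htop ▸ lintegral_mono_set Set.inter_subset_left)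
    have : ApConst n p w = ⊤ := by
      refine top_le_iff.1 (le_trans (le_of_eq ?_) hApB)
      rw [hStop, ENNReal.mul_top (by simpa using hVtop.ne : V⁻¹ ≠ 0),
        ENNReal.top_rpow_of_pos hp1, ENNReal.mul_top]
      exact mul_ne_zero (by simpa using hVtop.ne) hW0
    exact absurd this hA.ne
  -- a.e. on B, w is neither 0 nor ⊤
  have hae : ∀ᵐ x ∂(volume.restrict B), w x ≠ 0 ∧ w x ≠ ⊤ := by
    have h1 : ∀ᵐ x ∂(volume.restrict B), w x < ⊤ := ae_lt_top hw.1 hWfin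
    have h2 : ∀ᵐ x ∂(volume.restrict B), w x ≠ 0 := by
      rw [ae_restrict_iff' hBm]
      have : {x | ¬ (x ∈ B → w x ≠ 0)} ⊆ B ∩ {x | w x = 0} := by
        intro x hx
        push_neg at hx
        exact ⟨hx.1, hx.2⟩
      exact measure_mono_null this hZ
    filter_upwards [h1, h2] with x hx1 hx2 using ⟨hx2, hx1.ne⟩
  have hpq : p.HolderConjugate q := Real.HolderConjugate.conjExponent hp
  -- Hölder
  have key : IB ≤ AB ^ (1 / p) * SB ^ (1 / q) := by
    have e : ∀ᵐ x ∂(volume.restrict B),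
        g x = g x * w x ^ (1 / p) * w x ^ (-(1 / p)) := by
      filter_upwards [hae] with x hx
      rw [mul_assoc, ← ENNReal.rpow_add _ _ hx.1 hx.2]
      norm_num
    calc IB = ∫⁻ x in B, ((fun x => g x * w x ^ (1 / p)) * fun x => w x ^ (-(1 / p))) x := by
          rw [hIdef]; exact lintegral_congr_ae e
      _ ≤ (∫⁻ x in B, (g x * w x ^ (1 / p)) ^ p) ^ (1 / p) *
            (∫⁻ x in B, (w x ^ (-(1 / p))) ^ q) ^ (1 / q) :=
          ENNReal.lintegral_mul_le_Lp_mul_Lq _ hpq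
            (hg.mul (hw.1.pow_const _)).aemeasurable (hw.1.pow_const _).aemeasurable
      _ = AB ^ (1 / p) * SB ^ (1 / q) := by
          congr 1
          · congr 1
            refine lintegral_congr fun x => ?_
            rw [ENNReal.mul_rpow_of_nonneg _ _ hp0.le, ← ENNReal.rpow_mul,
              one_div_mul_cancel hp0.ne', ENNReal.rpow_one]
          · congr 1
            refine lintegral_congr fun x => ?_
            rw [← ENNReal.rpow_mul]
            congr 1
            rw [hq]
            field_simp
            ring
    -- end
  have hq_eq : 1 / q * p = p - 1 := by
    rw [hq]; field_simp
  have h1 : V ^ p ≤ ε ^ p * (AB * SB ^ (p - 1)) := by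
    have h := ENNReal.rpow_le_rpow (hV.trans (mul_le_mul_right key ε)) hp0.le
    rw [ENNReal.mul_rpow_of_nonneg _ _ hp0.le, ENNReal.mul_rpow_of_nonneg _ _ hp0.le,
      ← ENNReal.rpow_mul, ← ENNReal.rpow_mul, one_div_mul_cancel hp0.ne', hq_eq,
      ENNReal.rpow_one] at h
    exact h
  have h2 : W * (SB ^ (p - 1) * (V⁻¹) ^ p) ≤ ApConst n p w := by
    refine le_trans (le_of_eq ?_) hApB
    have e1 : (V⁻¹ * SB) ^ (p - 1) = (V⁻¹) ^ (p - 1) * SB ^ (p - 1) :=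
      ENNReal.mul_rpow_of_nonneg _ _ (by linarith)
    have e2 : (V⁻¹) ^ p = (V⁻¹) ^ (p - 1) * V⁻¹ := by
      have h := ENNReal.rpow_add (x := V⁻¹) (p - 1) 1
        (by simpa using hVtop.ne) (by simpa using hVpos.ne')
      rw [sub_add_cancel] at h
      rw [h, ENNReal.rpow_one]
    rw [e1, e2]; ring
  have hc : V ^ p * (V⁻¹) ^ p = 1 := by
    rw [← ENNReal.mul_rpow_of_nonneg _ _ hp0.le, ENNReal.mul_inv_cancel hVpos.ne' hVtop.ne,
      ENNReal.one_rpow]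
  calc W = W * V ^ p * (V⁻¹) ^ p := by rw [mul_assoc, hc, mul_one]
    _ ≤ W * (ε ^ p * (AB * SB ^ (p - 1))) * (V⁻¹) ^ p :=
        mul_le_mul_left (mul_le_mul_right h1 W) _
    _ = ε ^ p * AB * (W * (SB ^ (p - 1) * (V⁻¹) ^ p)) := by ring
    _ ≤ ε ^ p * AB * ApConst n p w := mul_le_mul_right h2 _
    _ = ε ^ p * (ApConst n p w * AB) := by ring

end Aux2

/-- the weak type `(p,p)` estimate for the Orlicz maximal operator with
linear dependence on the `A_p` constant:
`w({M_{Φ_λ}f > t}) ≤ c [w]_{A_p} ∫ Φ_λ(f/t)^p w dx`. -/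
theorem statement13 (n : ℕ) (hn : 1 ≤ n) (lam : ℝ) (hlam : 0 ≤ lam)
    (p : ℝ) (hp : 1 < p) :
    ∃ c : ℝ≥0∞, 0 < c ∧ c < ∞ ∧
      ∀ w : (Fin n → ℝ) → ℝ≥0∞, IsWeight n w → ApConst n p w < ∞ →
        ∀ t : ℝ, 0 < t → ∀ f : (Fin n → ℝ) → ℝ, Measurable f → (∀ x, 0 ≤ f x) →
          (∫⁻ x in {x | ENNReal.ofReal t < orliczMax n lam f x}, w x) ≤
            c * ApConst n p w *
              ∫⁻ x, ENNReal.ofReal (PhiLam lam (f x / t)) ^ p * w x := by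

  classical
  obtain ⟨N, τ, hτ, hsat⟩ := HasBesicovitchCovering.no_satelliteConfig (α := Fin n → ℝ)
  have hp0 : (0:ℝ) < p := by linarith
  set ε : ℝ≥0∞ := (2:ℝ≥0∞) ^ n with hεdef
  have hε0 : ε ≠ 0 := by positivity
  have hεt : ε ≠ ⊤ := by
    rw [hεdef]; exact (ENNReal.pow_lt_top ENNReal.ofNat_lt_top).ne
  have hεp0 : ε ^ p ≠ 0 := (ENNReal.rpow_pos (by positivity) hεt).ne'
  have hεpt : ε ^ p ≠ ⊤ := ENNReal.rpow_ne_top_of_nonneg hp0.le hεt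
  refine ⟨((N : ℝ≥0∞) + 1) * ε ^ p, ?_, ?_, ?_⟩
  · exact ENNReal.mul_pos (by simp) hεp0
  · exact ENNReal.mul_lt_top (by simp [lt_top_iff_ne_top]) (lt_top_iff_ne_top.2 hεpt)
  intro w hw hA t ht f hf hf0
  set g : (Fin n → ℝ) → ℝ≥0∞ := fun y => ENNReal.ofReal (PhiLam lam (f y / t)) with hgdef
  have hg : Measurable g := by
    apply ENNReal.measurable_ofReal.comp
    have hd : Measurable fun y => f y / t := hf.div_const t
    exact hd.mul ((Real.measurable_log.comp (measurable_const.add hd)).pow_const lam)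
  set A : ℝ≥0∞ := ∫⁻ x, g x ^ p * w x with hAdef
  set μw := volume.withDensity w with hμw
  set ν := volume.withDensity (fun x => g x ^ p * w x) with hν
  set E : ℕ → Set (Fin n → ℝ) := fun m =>
    {x | ∃ r : ℝ, 0 < r ∧ r ≤ (m:ℝ) ∧
      volume (Metric.closedBall x r) < ε * ∫⁻ y in Metric.closedBall x r, g y} with hEdef
  have hincl : {x | ENNReal.ofReal t < orliczMax n lam f x} ⊆ ⋃ m, E m := by
    intro x hx
    rw [Set.mem_setOf_eq] at hx
    obtain ⟨Q, hQ, hxQ, hlux⟩ : ∃ Q, IsCube n Q ∧ x ∈ Q ∧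
        ENNReal.ofReal t < luxNorm n lam Q f := by
      by_contra hcon
      push_neg at hcon
      have hle : orliczMax n lam f x ≤ ENNReal.ofReal t :=
        iSup₂_le fun Q hQ => iSup_le fun hxQ => hcon Q hQ hxQ
      exact absurd hle (not_le.2 hx)
    have havg : volume Q < ∫⁻ y in Q, g y := by
      by_contra hle
      push_neg at hle
      have hgabs : (fun y => ENNReal.ofReal (PhiLam lam (|f y| / t))) = g := by
        funext y; rw [hgdef, abs_of_nonneg (hf0 y)]
      have hcond : (volume Q)⁻¹ * ∫⁻ y in Q, ENNReal.ofReal (PhiLam lam (|f y| / t)) ≤ 1 := by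
        obtain ⟨hQ0, hQt⟩ := cube_vol_pos hQ
        calc (volume Q)⁻¹ * ∫⁻ y in Q, ENNReal.ofReal (PhiLam lam (|f y| / t))
            = (volume Q)⁻¹ * ∫⁻ y in Q, g y := by rw [hgabs]
          _ ≤ (volume Q)⁻¹ * volume Q := mul_le_mul_right hle _
          _ = 1 := ENNReal.inv_mul_cancel hQ0.ne' hQt.ne
      have : luxNorm n lam Q f ≤ ENNReal.ofReal t := by
        refine iInf_le_of_le t (iInf_le_of_le ht ?_)
        exact iInf_le_of_le hcond le_rfl
      exact absurd this (not_le.2 hlux)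
    obtain ⟨a, h₀, hh0, hQeq⟩ := hQ
    refine Set.mem_iUnion.2 ⟨⌈h₀⌉₊, h₀, hh0, Nat.le_ceil h₀, ?_⟩
    have hQsub : Q ⊆ Metric.closedBall x h₀ := by
      intro y hy
      rw [ball_eq_cube n x hh0.le]
      intro i
      have hyi : y i ∈ Set.Icc (a i) (a i + h₀) := by
        rw [hQeq] at hy; exact hy i
      have hxi : x i ∈ Set.Icc (a i) (a i + h₀) := by
        rw [hQeq] at hxQ; exact hxQ i
      rw [Set.mem_Icc] at hyi hxi ⊢
      constructor <;> [linarith [hyi.1, hxi.2]; linarith [hyi.2, hxi.1]]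
    have hvol : volume (Metric.closedBall x h₀) = ε * volume Q := by
      rw [ball_eq_cube n x hh0.le, cube_vol, hQeq, cube_vol, hεdef]
      rw [show ENNReal.ofReal (2 * h₀) = 2 * ENNReal.ofReal h₀ by
        rw [ENNReal.ofReal_mul (by norm_num : (0:ℝ) ≤ 2), ENNReal.ofReal_ofNat]]
      rw [mul_pow]
    calc volume (Metric.closedBall x h₀) = ε * volume Q := hvol
      _ < ε * ∫⁻ y in Q, g y := (ENNReal.mul_lt_mul_iff_right hε0 hεt).2 havg
      _ ≤ ε * ∫⁻ y in Metric.closedBall x h₀, g y :=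
          mul_le_mul_right (lintegral_mono_set hQsub) _
  have hEmono : Monotone E := by
    intro m m' hmm' x hx
    obtain ⟨r, h1, h2, h3⟩ := hx
    exact ⟨r, h1, h2.trans (Nat.cast_le.2 hmm'), h3⟩
  have hEm : ∀ m, μw (E m) ≤ (N : ℝ≥0∞) * (ε ^ p * (ApConst n p w * A)) := by
    intro m
    have hmem : ∀ b : ↥(E m), ∃ r : ℝ, 0 < r ∧ r ≤ (m:ℝ) ∧
        volume (Metric.closedBall (b:Fin n → ℝ) r) <
          ε * ∫⁻ y in Metric.closedBall (b:Fin n → ℝ) r, g y := fun b => b.2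
    choose r hr0 hrm hrP using hmem
    let pack : Besicovitch.BallPackage (↥(E m)) (Fin n → ℝ) :=
      { c := fun b => b, r := r, rpos := hr0, r_bound := m, r_le := hrm }
    obtain ⟨s, hsd, hscov⟩ := Besicovitch.exist_disjoint_covering_families hτ hsat pack
    have hcover : E m ⊆ ⋃ i : Fin N, ⋃ j ∈ s i, Metric.closedBall (pack.c j) (pack.r j) := by
      refine subset_trans (Subtype.range_coe (s := E m) ▸ hscov) ?_
      exact Set.iUnion_mono fun i => Set.iUnion₂_mono fun j _ => Metric.ball_subset_closedBall
    have hfam : ∀ i : Fin N,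
        μw (⋃ j ∈ s i, Metric.closedBall (pack.c j) (pack.r j)) ≤
          ε ^ p * (ApConst n p w * A) := by
      intro i
      have hcnt : (s i).Countable := by
        refine Set.PairwiseDisjoint.countable_of_isOpen
          ((hsd i).mono fun j => Metric.ball_subset_closedBall)
          (fun j _ => Metric.isOpen_ball) (fun j _ => Metric.nonempty_ball.2 (hr0 j))
      have hper : ∀ j : ↥(E m),
          μw (Metric.closedBall (pack.c j) (pack.r j)) ≤
            ε ^ p * (ApConst n p w * ν (Metric.closedBall (pack.c j) (pack.r j))) := by
        intro j
        rw [hμw, withDensity_apply _ measurableSet_closedBall, hν,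
          withDensity_apply _ measurableSet_closedBall]
        exact cube_weight_est n hp hw hA hg (isCube_closedBall n _ (hr0 j)) (hrP j).le
      calc μw (⋃ j ∈ s i, Metric.closedBall (pack.c j) (pack.r j))
          ≤ ∑' j : ↥(s i), μw (Metric.closedBall (pack.c j) (pack.r j)) :=
            measure_biUnion_le μw hcnt _
        _ ≤ ∑' j : ↥(s i), ε ^ p * (ApConst n p w * ν (Metric.closedBall (pack.c j) (pack.r j))) :=
            ENNReal.tsum_le_tsum fun j => hper j
        _ = ε ^ p * (ApConst n p w * ∑' j : ↥(s i), ν (Metric.closedBall (pack.c j) (pack.r j))) := by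
            rw [ENNReal.tsum_mul_left, ENNReal.tsum_mul_left]
        _ = ε ^ p * (ApConst n p w * ν (⋃ j ∈ s i, Metric.closedBall (pack.c j) (pack.r j))) := by
            rw [measure_biUnion hcnt (hsd i) fun j _ => measurableSet_closedBall]
        _ ≤ ε ^ p * (ApConst n p w * ν Set.univ) := by
            exact mul_le_mul_right (mul_le_mul_right (measure_mono (Set.subset_univ _)) _) _
        _ = ε ^ p * (ApConst n p w * A) := by
            rw [hν, withDensity_apply _ MeasurableSet.univ, Measure.restrict_univ, hAdef]
    calc μw (E m) ≤ μw (⋃ i : Fin N, ⋃ j ∈ s i, Metric.closedBall (pack.c j) (pack.r j)) :=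
          measure_mono hcover
      _ ≤ ∑ i : Fin N, μw (⋃ j ∈ s i, Metric.closedBall (pack.c j) (pack.r j)) :=
          measure_iUnion_fintype_le _ _
      _ ≤ ∑ _i : Fin N, ε ^ p * (ApConst n p w * A) := Finset.sum_le_sum fun i _ => hfam i
      _ = (N : ℝ≥0∞) * (ε ^ p * (ApConst n p w * A)) := by
          rw [Finset.sum_const, Finset.card_univ, Fintype.card_fin, nsmul_eq_mul]
  calc ∫⁻ x in {x | ENNReal.ofReal t < orliczMax n lam f x}, w x
      = μw {x | ENNReal.ofReal t < orliczMax n lam f x} := (withDensity_apply' w _).symm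
    _ ≤ μw (⋃ m, E m) := measure_mono hincl
    _ = ⨆ m, μw (E m) := hEmono.directed_le.measure_iUnion
    _ ≤ (N : ℝ≥0∞) * (ε ^ p * (ApConst n p w * A)) := iSup_le hEm
    _ ≤ ((N : ℝ≥0∞) + 1) * (ε ^ p * (ApConst n p w * A)) :=
        mul_le_mul_left (le_self_add) _
    _ = ((N : ℝ≥0∞) + 1) * ε ^ p * ApConst n p w * A := by ring
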